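/- arXiv:1601.07327 — 3 statements merged into one kernel-verified Lean document; each statement's English description precedes it below -/
import Mathlib

section
/- Let Ω ⊂ ℝ^N be a ball centered at the origin, H an open half-space with 0 ∈ ∂H, and u ∈ W^{1,p}(Ω) for some p ∈ [1,∞). If B ∈ L^∞(ℝ), then ∫_Ω B(u)|∇u|^p dx = ∫_Ω B(u_H)|∇u_H|^p dx, where u_H is the two-point rearrangement of u with respect to H. -/
open MeasureTheory Metric Filter Asymptotics Set
open scoped Topology ENNReal RealInnerProductSpace Pointwise

section maxmin
variable {E : Type*} [NormedAddCommGroup E] [NormedSpace ℝ E]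

lemma aux_hasFDerivAt_max {f g : E → ℝ} {L : E →L[ℝ] ℝ} {x : E}
    (hf : HasFDerivAt f L x) (hg : HasFDerivAt g L x) (hfg : f x = g x) :
    HasFDerivAt (fun y => max (f y) (g y)) L x := by
  have hd : (fun y => g y - f y) =o[𝓝 x] fun y => y - x := by
    have h0 : HasFDerivAt (fun y => g y - f y) (0 : E →L[ℝ] ℝ) x := by
      simpa using hg.fun_sub hf
    rw [hasFDerivAt_iff_isLittleO] at h0
    simpa [hfg] using h0
  have h1 : (fun y => max (f y) (g y) - f y) =o[𝓝 x] fun y => y - x := by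
    refine (Asymptotics.isBigO_of_le _ fun y => ?_).trans_isLittleO hd
    have h2 : max (f y) (g y) - f y = max 0 (g y - f y) := by
      rw [← max_sub_sub_right]; simp
    rw [h2]
    simp only [Real.norm_eq_abs]
    rcases le_or_gt (g y - f y) 0 with h | h
    · simp [max_eq_left h]
    · simp [max_eq_right h.le, le_abs_self, abs_of_pos h]
  rw [hasFDerivAt_iff_isLittleO] at hf ⊢
  have heq : (fun y => max (f y) (g y) - max (f x) (g x) - L (y - x)) =
      fun y => (max (f y) (g y) - f y) + (f y - f x - L (y - x)) := by
    funext y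
    rw [← hfg, max_self]
    ring
  rw [heq]
  exact h1.add hf

lemma aux_hasFDerivAt_min {f g : E → ℝ} {L : E →L[ℝ] ℝ} {x : E}
    (hf : HasFDerivAt f L x) (hg : HasFDerivAt g L x) (hfg : f x = g x) :
    HasFDerivAt (fun y => min (f y) (g y)) L x := by
  have h := aux_hasFDerivAt_max (f := fun y => -f y) (g := fun y => -g y)
    (L := -L) (hf.neg) (hg.neg) (by simp [hfg])
  have h2 : HasFDerivAt (fun y => -max (-f y) (-g y)) (-(-L)) x := h.neg
  simpa [max_neg_neg] using h2
end maxmin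

lemma aux_fderiv_zero_of_density {N : ℕ}
    {h : EuclideanSpace ℝ (Fin N) → ℝ} {s : Set (EuclideanSpace ℝ (Fin N))}
    {x : EuclideanSpace ℝ (Fin N)}
    (hx : DifferentiableAt ℝ h x) (hxs : x ∈ s) (h0 : ∀ y ∈ s, h y = 0)
    (hd : Tendsto (fun r => volume (s ∩ closedBall x r) / volume (closedBall x r))
      (𝓝[>] 0) (𝓝 1)) :
    fderiv ℝ h x = 0 := by
  by_contra hL
  set L := fderiv ℝ h x with hLdef
  set μ : Measure (EuclideanSpace ℝ (Fin N)) := volume with hμ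
  set n := Module.finrank ℝ (EuclideanSpace ℝ (Fin N)) with hn
  set K : ℕ → Set (EuclideanSpace ℝ (Fin N)) :=
    fun m => {w | ‖w‖ ≤ 1 ∧ |L w| ≤ (1 : ℝ)/(m+1)} with hK
  have hKclosed : ∀ m, IsClosed (K m) :=
    fun m => (isClosed_le continuous_norm continuous_const).inter
      (isClosed_le (L.continuous.abs) continuous_const)
  have hKanti : Antitone K := by
    intro a b hab w hw
    have hab' : (a:ℝ) ≤ b := Nat.cast_le.mpr hab
    exact ⟨hw.1, hw.2.trans (one_div_le_one_div_of_le (by positivity) (by linarith))⟩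
  have hKfin : μ (K 0) ≠ ∞ := by
    refine (lt_of_le_of_lt (measure_mono ?_)
      (measure_closedBall_lt_top (x := (0 : EuclideanSpace ℝ (Fin N))) (r := 1))).ne
    intro w hw; simpa [mem_closedBall, dist_eq_norm] using hw.1
  have hKinter : μ (⋂ m, K m) = 0 := by
    have hsub : (⋂ m, K m) ⊆ (LinearMap.ker (L : EuclideanSpace ℝ (Fin N) →ₗ[ℝ] ℝ) :
        Submodule ℝ (EuclideanSpace ℝ (Fin N))) := by
      intro w hw
      simp only [Set.mem_iInter] at hw
      have habs0 : |L w| = 0 := by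
        by_contra habs
        have hpos : 0 < |L w| := lt_of_le_of_ne (abs_nonneg _) (Ne.symm habs)
        obtain ⟨m, hm⟩ := exists_nat_gt (1 / |L w|)
        have h2 := (hw m).2
        have h1 : (1:ℝ)/(m+1) < |L w| := by
          rw [div_lt_iff₀ (by positivity)]
          rw [div_lt_iff₀ hpos] at hm
          nlinarith
        linarith
      have : L w = 0 := abs_eq_zero.mp habs0
      simpa [LinearMap.mem_ker] using this
    refine measure_mono_null hsub (Measure.addHaar_submodule μ _ ?_)
    intro habs
    apply hL
    have hcoe : (L : EuclideanSpace ℝ (Fin N) →ₗ[ℝ] ℝ) = 0 := LinearMap.ker_eq_top.mp habs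
    ext w
    exact DFunLike.congr_fun hcoe w
  have htend : Tendsto (fun m => μ (K m)) atTop (𝓝 0) := by
    have := tendsto_measure_iInter_atTop (μ := μ)
      (fun m => (hKclosed m).measurableSet.nullMeasurableSet) hKanti ⟨0, hKfin⟩
    rwa [hKinter] at this
  set v := μ (ball (0 : EuclideanSpace ℝ (Fin N)) 1) with hv
  have hv0 : v ≠ 0 := (measure_ball_pos μ _ one_pos).ne'
  have hvtop : v ≠ ∞ := measure_ball_lt_top.ne
  have hhalf : (0:ℝ≥0∞) < v / 2 := ENNReal.div_pos hv0 (by norm_num)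
  obtain ⟨m, hm⟩ : ∃ m, μ (K m) < v / 2 :=
    (htend.eventually_lt_const hhalf).exists
  set ε := (1:ℝ)/(m+1) with hε
  have hεpos : 0 < ε := by positivity
  have hder := hx.hasFDerivAt
  rw [hasFDerivAt_iff_isLittleO] at hder
  have hev := isLittleO_iff.mp hder hεpos
  rw [Metric.eventually_nhds_iff] at hev
  obtain ⟨δ, hδpos, hball⟩ := hev
  have key : ∀ r : ℝ, 0 < r → r < δ →
      μ (s ∩ closedBall x r) / μ (closedBall x r) ≤ 2⁻¹ := by
    intro r hr hrδ
    have hsub : s ∩ closedBall x r ⊆ (fun z => x + z) '' (r • K m) := by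
      rintro y ⟨hys, hyb⟩
      have hyx : ‖y - x‖ ≤ r := by rwa [mem_closedBall, dist_eq_norm] at hyb
      have hLyx : |L (y - x)| ≤ ε * r := by
        have hdist : dist y x < δ := lt_of_le_of_lt (by rwa [dist_eq_norm]) hrδ
        have hb := hball hdist
        rw [h0 y hys, h0 x hxs] at hb
        have : ‖-(L (y - x))‖ ≤ ε * ‖y - x‖ := by simpa using hb
        rw [norm_neg] at this
        calc |L (y - x)| ≤ ε * ‖y - x‖ := this
          _ ≤ ε * r := by nlinarith
      refine ⟨y - x, ?_, add_sub_cancel x y⟩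
      refine ⟨r⁻¹ • (y - x), ⟨?_, ?_⟩, ?_⟩
      · rw [norm_smul, norm_inv, Real.norm_eq_abs, abs_of_pos hr]
        rw [inv_mul_le_iff₀ hr, mul_one]
        exact hyx
      · rw [ContinuousLinearMap.map_smul]
        simp only [smul_eq_mul, abs_mul, abs_inv, abs_of_pos hr]
        rw [inv_mul_le_iff₀ hr]
        calc |L (y - x)| ≤ ε * r := hLyx
          _ = r * ε := mul_comm _ _
        -- goal |?| ≤ (1/(m+1)) * r? careful
      · show r • r⁻¹ • (y - x) = y - x
        rw [smul_smul, mul_inv_cancel₀ hr.ne', one_smul]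
    have himg : μ ((fun z => x + z) '' (r • K m)) = μ (r • K m) := by
      have : (fun z => x + z) '' (r • K m) = (fun z => -x + z) ⁻¹' (r • K m) := by
        ext z
        simp only [Set.mem_image, Set.mem_preimage]
        constructor
        · rintro ⟨w, hw, rfl⟩; simpa using hw
        · intro hz; exact ⟨-x + z, hz, by abel⟩
      rw [this, measure_preimage_add]
    have hcb : μ (closedBall x r) = ENNReal.ofReal (r ^ n) * v :=
      Measure.addHaar_closedBall μ x hr.le
    have hcb0 : μ (closedBall x r) ≠ 0 := (measure_closedBall_pos μ x hr).ne'
    have hcbtop : μ (closedBall x r) ≠ ∞ := measure_closedBall_lt_top.ne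
    have hsm : μ (r • K m) = ENNReal.ofReal (|r ^ n|) * μ (K m) :=
      Measure.addHaar_smul μ r (K m)
    have hle : μ (s ∩ closedBall x r) ≤ 2⁻¹ * μ (closedBall x r) := by
      calc μ (s ∩ closedBall x r) ≤ μ ((fun z => x + z) '' (r • K m)) :=
            measure_mono hsub
        _ = ENNReal.ofReal (|r ^ n|) * μ (K m) := by rw [himg, hsm]
        _ ≤ ENNReal.ofReal (r ^ n) * (v / 2) := by
            rw [abs_of_nonneg (pow_nonneg hr.le n)]
            exact mul_le_mul_right hm.le _
        _ = 2⁻¹ * μ (closedBall x r) := by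
            rw [hcb, ENNReal.div_eq_inv_mul]
            ring
    rw [ENNReal.div_le_iff_le_mul (Or.inl hcb0) (Or.inl hcbtop)]
    exact hle
  have hev2 : ∀ᶠ r in 𝓝[>] (0:ℝ),
      μ (s ∩ closedBall x r) / μ (closedBall x r) ≤ 2⁻¹ := by
    filter_upwards [Ioo_mem_nhdsGT_of_mem (Set.mem_Ico.mpr ⟨le_rfl, hδpos⟩)] with r hr
    exact key r hr.1 hr.2
  have hfin := le_of_tendsto hd hev2
  norm_num at hfin

section opnorm
variable {E : Type*} [NormedAddCommGroup E] [InnerProductSpace ℝ E]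

lemma aux_opNorm_comp (T : E ≃ₗᵢ[ℝ] E) (f : E →L[ℝ] ℝ) :
    ‖f.comp T.toLinearIsometry.toContinuousLinearMap‖ = ‖f‖ := by
  have key : ∀ (g : E →L[ℝ] ℝ) (S : E ≃ₗᵢ[ℝ] E),
      ‖g.comp S.toLinearIsometry.toContinuousLinearMap‖ ≤ ‖g‖ := by
    intro g S
    refine (g.opNorm_comp_le _).trans ?_
    have h1 : ‖S.toLinearIsometry.toContinuousLinearMap‖ ≤ 1 :=
      S.toLinearIsometry.norm_toContinuousLinearMap_le
    nlinarith [norm_nonneg g, norm_nonneg S.toLinearIsometry.toContinuousLinearMap]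
  refine le_antisymm (key f T) ?_
  have h2 : f = (f.comp T.toLinearIsometry.toContinuousLinearMap).comp
      T.symm.toLinearIsometry.toContinuousLinearMap := by
    ext z
    simp
  have h3 := key (f.comp T.toLinearIsometry.toContinuousLinearMap) T.symm
  rw [← h2] at h3
  exact h3
end opnorm

set_option maxHeartbeats 1000000 in
theorem stmt_4 {N : ℕ} (hN : 1 ≤ N) (R : ℝ) (hR : 0 < R)
    (e : EuclideanSpace ℝ (Fin N)) (he : ‖e‖ = 1)
    (σ : EuclideanSpace ℝ (Fin N) → EuclideanSpace ℝ (Fin N))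
    (hσ : ∀ x, σ x = x - (2 * ⟪x, e⟫) • e)
    (p : ℝ) (hp : 1 ≤ p)
    (u : EuclideanSpace ℝ (Fin N) → ℝ)
    (hudiff : DifferentiableOn ℝ u (Metric.ball (0 : EuclideanSpace ℝ (Fin N)) R))
    (huLp : MemLp u (ENNReal.ofReal p)
      (volume.restrict (Metric.ball (0 : EuclideanSpace ℝ (Fin N)) R)))
    (hguLp : MemLp (fun x => ‖fderiv ℝ u x‖) (ENNReal.ofReal p)
      (volume.restrict (Metric.ball (0 : EuclideanSpace ℝ (Fin N)) R)))
    (B : ℝ → ℝ) (hBmeas : Measurable B) (hBbdd : ∃ M : ℝ, ∀ t, |B t| ≤ M)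
    (uH : EuclideanSpace ℝ (Fin N) → ℝ)
    (huH : ∀ x, uH x =
      if 0 < ⟪x, e⟫ then max (u x) (u (σ x)) else min (u x) (u (σ x))) :
    ∫ x in Metric.ball (0 : EuclideanSpace ℝ (Fin N)) R, B (u x) * ‖fderiv ℝ u x‖ ^ p =
    ∫ x in Metric.ball (0 : EuclideanSpace ℝ (Fin N)) R, B (uH x) * ‖fderiv ℝ uH x‖ ^ p := by
  obtain ⟨M, hM⟩ := hBbdd
  have hM0 : 0 ≤ M := (abs_nonneg _).trans (hM 0)
  set Ω : Set (EuclideanSpace ℝ (Fin N)) := Metric.ball 0 R with hΩ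
  have hΩopen : IsOpen Ω := isOpen_ball
  have hΩmeas : MeasurableSet Ω := hΩopen.measurableSet
  -- basic facts about σ
  have hinner : ∀ x, ⟪σ x, e⟫ = -⟪x, e⟫ := by
    intro x
    rw [hσ]
    rw [inner_sub_left, real_inner_smul_left, real_inner_self_eq_norm_sq, he]
    ring
  have hσσ : ∀ x, σ (σ x) = x := by
    intro x
    rw [hσ (σ x), hinner x, hσ x]
    module
  -- σ as a linear isometry equivalence
  set T : EuclideanSpace ℝ (Fin N) ≃ₗᵢ[ℝ] EuclideanSpace ℝ (Fin N) :=
    Submodule.reflection (ℝ ∙ e)ᗮ with hTdef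
  have hT : ∀ x, T x = σ x := by
    intro x
    rw [hTdef, Submodule.reflection_apply, hσ]
    rw [Submodule.starProjection_orthogonal_val, Submodule.starProjection_singleton]
    rw [he, real_inner_comm e x]
    push_cast
    module
  have hTfun : ⇑T = σ := funext hT
  have hσcont : Continuous σ := hTfun ▸ T.continuous
  have hσmeas : Measurable σ := hσcont.measurable
  have hnormσ : ∀ x, ‖σ x‖ = ‖x‖ := fun x => by rw [← hT]; exact T.norm_map x
  have hmp : MeasurePreserving σ
      (volume : Measure (EuclideanSpace ℝ (Fin N))) volume := by
    rw [← hTfun]; exact T.measurePreserving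
  have hemb : MeasurableEmbedding σ := by
    rw [← hTfun]; exact T.toHomeomorph.measurableEmbedding
  have hσΩ : ∀ x, σ x ∈ Ω ↔ x ∈ Ω := by
    intro x; simp [hΩ, mem_ball, dist_eq_norm, hnormσ]
  -- continuous linear map version
  set TCL : EuclideanSpace ℝ (Fin N) →L[ℝ] EuclideanSpace ℝ (Fin N) :=
    T.toLinearIsometry.toContinuousLinearMap with hTCL
  have hTCLfun : ⇑TCL = σ := hTfun
  -- differentiability of u ∘ σ
  have hdu : ∀ x ∈ Ω, DifferentiableAt ℝ u x := fun x hx =>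
    hudiff.differentiableAt (hΩopen.mem_nhds hx)
  have hduσ : ∀ x ∈ Ω, DifferentiableAt ℝ (fun y => u (σ y)) x := by
    intro x hx
    have h1 : DifferentiableAt ℝ u (σ x) := hdu _ ((hσΩ x).mpr hx)
    have h2 : DifferentiableAt ℝ σ x := by
      rw [← hTCLfun]; exact TCL.differentiableAt
    exact h1.comp x h2
  have hfderivσ : ∀ x ∈ Ω,
      fderiv ℝ (fun y => u (σ y)) x = (fderiv ℝ u (σ x)).comp TCL := by
    intro x hx
    have h1 : DifferentiableAt ℝ u (σ x) := hdu _ ((hσΩ x).mpr hx)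
    have h2 : DifferentiableAt ℝ TCL x := TCL.differentiableAt
    have h3 : fderiv ℝ (u ∘ ⇑TCL) x = (fderiv ℝ u (σ x)).comp (fderiv ℝ TCL x) := by
      rw [fderiv_comp x (by rwa [hTCLfun]) h2]
      rw [hTCLfun]
    rw [TCL.fderiv] at h3
    rw [← h3]
    congr 1
    rw [hTCLfun]
    rfl
  have hTT : ∀ f : EuclideanSpace ℝ (Fin N) →L[ℝ] ℝ, (f.comp TCL).comp TCL = f := by
    intro f
    ext z
    simp only [ContinuousLinearMap.comp_apply]
    rw [hTCL]
    show f (T (T z)) = f z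
    rw [hT, hT, hσσ]
  have hnormT : ∀ f : EuclideanSpace ℝ (Fin N) →L[ℝ] ℝ, ‖f.comp TCL‖ = ‖f‖ :=
    fun f => aux_opNorm_comp T f
  -- half spaces
  set Sp : Set (EuclideanSpace ℝ (Fin N)) := {x | 0 < ⟪x, e⟫} with hSp
  set Sm : Set (EuclideanSpace ℝ (Fin N)) := {x | ⟪x, e⟫ < 0} with hSm
  have hinnercont : Continuous fun x : EuclideanSpace ℝ (Fin N) => ⟪x, e⟫ :=
    Continuous.inner continuous_id continuous_const
  have hSpopen : IsOpen Sp := isOpen_lt continuous_const hinnercont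
  have hSmopen : IsOpen Sm := isOpen_lt hinnercont continuous_const
  -- continuity of u and u ∘ σ on Ω
  have hucont : ContinuousOn u Ω := hudiff.continuousOn
  have huσcont : ContinuousOn (fun y => u (σ y)) Ω :=
    hucont.comp hσcont.continuousOn (fun x hx => (hσΩ x).mpr hx)
  -- the coincidence set and the bad set
  set h : EuclideanSpace ℝ (Fin N) → ℝ := fun y => u y - u (σ y) with hh
  have hhcont : ContinuousOn h Ω := hucont.sub huσcont
  set s : Set (EuclideanSpace ℝ (Fin N)) := {y ∈ Ω | h y = 0} with hs
  have hsmeas : MeasurableSet s := by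
    have hopen : IsOpen (Ω ∩ h ⁻¹' ({0}ᶜ)) :=
      hhcont.isOpen_inter_preimage hΩopen isOpen_compl_singleton
    have : s = Ω \ (Ω ∩ h ⁻¹' ({0}ᶜ)) := by
      ext y
      simp only [hs, Set.mem_setOf_eq, Set.mem_diff, Set.mem_inter_iff, Set.mem_preimage,
        Set.mem_compl_iff, Set.mem_singleton_iff]
      tauto
    rw [this]
    exact hΩmeas.diff hopen.measurableSet
  have hZ0 : volume {x ∈ s | fderiv ℝ h x ≠ 0} = 0 := by
    have hbes := Besicovitch.ae_tendsto_measure_inter_div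
      (volume : Measure (EuclideanSpace ℝ (Fin N))) s
    rw [ae_iff, Measure.restrict_apply' hsmeas] at hbes
    refine measure_mono_null ?_ hbes
    rintro x ⟨hxs, hxf⟩
    refine ⟨?_, hxs⟩
    intro htend
    apply hxf
    have hxΩ : x ∈ Ω := hxs.1
    have hdiff : DifferentiableAt ℝ h x := (hdu x hxΩ).sub (hduσ x hxΩ)
    exact aux_fderiv_zero_of_density hdiff hxs (fun y hy => hy.2) htend
  have hgood : ∀ᵐ x ∂(volume : Measure (EuclideanSpace ℝ (Fin N))),
      x ∈ Ω → u x = u (σ x) → fderiv ℝ u x = fderiv ℝ (fun y => u (σ y)) x := by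
    rw [ae_iff]
    refine measure_mono_null ?_ hZ0
    intro x hx
    simp only [Set.mem_setOf_eq, not_forall] at hx
    obtain ⟨hxΩ, hxeq, hxne⟩ := hx
    refine ⟨⟨hxΩ, by simp [hh, hxeq]⟩, ?_⟩
    rw [fderiv_fun_sub (hdu x hxΩ) (hduσ x hxΩ)]
    exact sub_ne_zero_of_ne hxne
  -- the key pointwise identification
  have key : ∀ᵐ x ∂(volume : Measure (EuclideanSpace ℝ (Fin N))), x ∈ Ω ∩ Sp →
      (B (uH x) * ‖fderiv ℝ uH x‖ ^ p + B (uH (σ x)) * ‖fderiv ℝ uH (σ x)‖ ^ p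
        = B (u x) * ‖fderiv ℝ u x‖ ^ p + B (u (σ x)) * ‖fderiv ℝ u (σ x)‖ ^ p)
      ∧ ‖fderiv ℝ uH x‖ ^ p ≤ ‖fderiv ℝ u x‖ ^ p + ‖fderiv ℝ u (σ x)‖ ^ p
      ∧ ‖fderiv ℝ uH (σ x)‖ ^ p ≤ ‖fderiv ℝ u x‖ ^ p + ‖fderiv ℝ u (σ x)‖ ^ p := by
    filter_upwards [hgood] with x hgx hxmem
    obtain ⟨hxΩ, hxSp⟩ := hxmem
    have hxSp' : (0:ℝ) < ⟪x, e⟫ := hxSp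
    have hσxΩ : σ x ∈ Ω := (hσΩ x).mpr hxΩ
    have hσxSm : ⟪σ x, e⟫ < 0 := by rw [hinner]; linarith
    have main : (fderiv ℝ uH x = fderiv ℝ u x ∧ fderiv ℝ uH (σ x) = fderiv ℝ u (σ x)
          ∧ uH x = u x ∧ uH (σ x) = u (σ x))
        ∨ (fderiv ℝ uH x = (fderiv ℝ u (σ x)).comp TCL
          ∧ fderiv ℝ uH (σ x) = (fderiv ℝ u x).comp TCL
          ∧ uH x = u (σ x) ∧ uH (σ x) = u x) := by
      have hop1 : IsOpen {y | y ∈ Ω ∧ u y < u (σ y)} := by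
        have : {y | y ∈ Ω ∧ u y < u (σ y)}
            = Ω ∩ (fun y => u y - u (σ y)) ⁻¹' (Set.Iio 0) := by
          ext y
          simp only [Set.mem_setOf_eq, Set.mem_inter_iff, Set.mem_preimage, Set.mem_Iio]
          constructor
          · rintro ⟨h1, h2⟩; exact ⟨h1, by linarith⟩
          · rintro ⟨h1, h2⟩; exact ⟨h1, by linarith⟩
        rw [this]
        exact (hucont.sub huσcont).isOpen_inter_preimage hΩopen isOpen_Iio
      have hop2 : IsOpen {y | y ∈ Ω ∧ u (σ y) < u y} := by
        have : {y | y ∈ Ω ∧ u (σ y) < u y}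
            = Ω ∩ (fun y => u (σ y) - u y) ⁻¹' (Set.Iio 0) := by
          ext y
          simp only [Set.mem_setOf_eq, Set.mem_inter_iff, Set.mem_preimage, Set.mem_Iio]
          constructor
          · rintro ⟨h1, h2⟩; exact ⟨h1, by linarith⟩
          · rintro ⟨h1, h2⟩; exact ⟨h1, by linarith⟩
        rw [this]
        exact (huσcont.sub hucont).isOpen_inter_preimage hΩopen isOpen_Iio
      rcases lt_trichotomy (u x) (u (σ x)) with hlt | heq | hgt
      · -- u x < u (σ x) : uH agrees with u ∘ σ near x and near σ x
        right
        have hev1 : uH =ᶠ[𝓝 x] fun y => u (σ y) := by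
          filter_upwards [hSpopen.mem_nhds hxSp, hop1.mem_nhds ⟨hxΩ, hlt⟩] with y h1 h2
          rw [huH y, if_pos (show (0:ℝ) < ⟪y, e⟫ from h1), max_eq_right h2.2.le]
        have hσlt : u (σ (σ x)) < u (σ x) := by rw [hσσ]; exact hlt
        have hev2 : uH =ᶠ[𝓝 (σ x)] fun y => u (σ y) := by
          filter_upwards [hSmopen.mem_nhds hσxSm, hop2.mem_nhds ⟨hσxΩ, hσlt⟩] with y h1 h2
          rw [huH y, if_neg (show ¬ (0:ℝ) < ⟪y, e⟫ from not_lt.mpr (le_of_lt h1)), min_eq_right h2.2.le]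
        refine ⟨?_, ?_, ?_, ?_⟩
        · rw [hev1.fderiv_eq, hfderivσ x hxΩ]
        · rw [hev2.fderiv_eq, hfderivσ (σ x) hσxΩ, hσσ]
        · exact hev1.eq_of_nhds
        · rw [hev2.eq_of_nhds, hσσ]
      · -- u x = u (σ x) : use the a.e. identification of the derivatives
        left
        have hfd : fderiv ℝ u x = fderiv ℝ (fun y => u (σ y)) x := hgx hxΩ heq
        have hA' : fderiv ℝ u (σ x) = (fderiv ℝ u x).comp TCL := by
          rw [hfd, hfderivσ x hxΩ, hTT]
        have hfdσ : fderiv ℝ (fun y => u (σ y)) (σ x) = fderiv ℝ u (σ x) := by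
          rw [hfderivσ (σ x) hσxΩ, hσσ, hA']
        have hmaxev : uH =ᶠ[𝓝 x] fun y => max (u y) (u (σ y)) := by
          filter_upwards [hSpopen.mem_nhds hxSp] with y hy
          rw [huH y, if_pos (show (0:ℝ) < ⟪y, e⟫ from hy)]
        have hminev : uH =ᶠ[𝓝 (σ x)] fun y => min (u y) (u (σ y)) := by
          filter_upwards [hSmopen.mem_nhds hσxSm] with y hy
          rw [huH y, if_neg (show ¬ (0:ℝ) < ⟪y, e⟫ from not_lt.mpr (le_of_lt hy))]
        have hmax : HasFDerivAt (fun y => max (u y) (u (σ y))) (fderiv ℝ u x) x := by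
          refine aux_hasFDerivAt_max (hdu x hxΩ).hasFDerivAt ?_ heq
          have := (hduσ x hxΩ).hasFDerivAt
          rwa [← hfd] at this
        have hmin : HasFDerivAt (fun y => min (u y) (u (σ y)))
            (fderiv ℝ u (σ x)) (σ x) := by
          refine aux_hasFDerivAt_min (hdu (σ x) hσxΩ).hasFDerivAt ?_ ?_
          · have := (hduσ (σ x) hσxΩ).hasFDerivAt
            rwa [hfdσ] at this
          · rw [hσσ]; exact heq.symm
        refine ⟨?_, ?_, ?_, ?_⟩
        · rw [hmaxev.fderiv_eq, hmax.fderiv]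
        · rw [hminev.fderiv_eq, hmin.fderiv]
        · rw [hmaxev.eq_of_nhds]; exact max_eq_left heq.ge
        · rw [hminev.eq_of_nhds]; exact min_eq_left (by rw [hσσ]; exact heq.ge)
      · -- u (σ x) < u x : uH agrees with u near x and near σ x
        left
        have hev1 : uH =ᶠ[𝓝 x] u := by
          filter_upwards [hSpopen.mem_nhds hxSp, hop2.mem_nhds ⟨hxΩ, hgt⟩] with y h1 h2
          rw [huH y, if_pos (show (0:ℝ) < ⟪y, e⟫ from h1), max_eq_left h2.2.le]
        have hσgt : u (σ x) < u (σ (σ x)) := by rw [hσσ]; exact hgt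
        have hev2 : uH =ᶠ[𝓝 (σ x)] u := by
          filter_upwards [hSmopen.mem_nhds hσxSm, hop1.mem_nhds ⟨hσxΩ, hσgt⟩] with y h1 h2
          rw [huH y, if_neg (show ¬ (0:ℝ) < ⟪y, e⟫ from not_lt.mpr (le_of_lt h1)), min_eq_left h2.2.le]
        exact ⟨hev1.fderiv_eq, hev2.fderiv_eq, hev1.eq_of_nhds, hev2.eq_of_nhds⟩
    rcases main with ⟨h1, h2, h3, h4⟩ | ⟨h1, h2, h3, h4⟩
    · rw [h1, h2, h3, h4]
      refine ⟨rfl, ?_, ?_⟩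
      · exact le_add_of_nonneg_right (Real.rpow_nonneg (norm_nonneg _) p)
      · exact le_add_of_nonneg_left (Real.rpow_nonneg (norm_nonneg _) p)
    · rw [h1, h2, h3, h4, hnormT, hnormT]
      refine ⟨by ring, ?_, ?_⟩
      · exact le_add_of_nonneg_left (Real.rpow_nonneg (norm_nonneg _) p)
      · exact le_add_of_nonneg_right (Real.rpow_nonneg (norm_nonneg _) p)
  -- the hyperplane is null
  have hP0 : volume {x : EuclideanSpace ℝ (Fin N) | ⟪x, e⟫ = 0} = 0 := by
    set φ : EuclideanSpace ℝ (Fin N) →ₗ[ℝ] ℝ :=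
      (innerSL ℝ e : EuclideanSpace ℝ (Fin N) →L[ℝ] ℝ).toLinearMap with hφ
    have hset : {x : EuclideanSpace ℝ (Fin N) | ⟪x, e⟫ = 0} = (LinearMap.ker φ : Set _) := by
      ext x
      simp only [Set.mem_setOf_eq, SetLike.mem_coe, LinearMap.mem_ker, hφ,
        ContinuousLinearMap.coe_coe, innerSL_apply_apply]
      rw [real_inner_comm]
    rw [hset]
    refine Measure.addHaar_submodule volume _ ?_
    intro htop
    have he2 : e ∈ LinearMap.ker φ := by rw [htop]; trivial
    have : ⟪e, e⟫ = 0 := by simpa [hφ, LinearMap.mem_ker] using he2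
    rw [real_inner_self_eq_norm_sq, he] at this
    norm_num at this
  -- the two half-ball pieces
  set A : Set (EuclideanSpace ℝ (Fin N)) := Ω ∩ Sp with hA
  set A' : Set (EuclideanSpace ℝ (Fin N)) := Ω ∩ Sm with hA'
  have hAmeas : MeasurableSet A := hΩmeas.inter hSpopen.measurableSet
  have hA'meas : MeasurableSet A' := hΩmeas.inter hSmopen.measurableSet
  have hdisj : Disjoint A A' := by
    rw [Set.disjoint_left]
    rintro x ⟨-, hx1⟩ ⟨-, hx2⟩
    exact absurd (show ⟪x, e⟫ < 0 from hx2)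
      (not_lt.mpr (le_of_lt (show (0:ℝ) < ⟪x, e⟫ from hx1)))
  set U : Set (EuclideanSpace ℝ (Fin N)) := A ∪ A' with hUdef
  have hΩae : Ω =ᵐ[volume] U := by
    rw [MeasureTheory.ae_eq_set]
    constructor
    · refine measure_mono_null ?_ hP0
      rintro x ⟨hx1, hx2⟩
      simp only [hUdef, hA, hA', Set.mem_union, Set.mem_inter_iff, not_or, not_and] at hx2
      have h1 := hx2.1 hx1
      have h2 := hx2.2 hx1
      simp only [hSp, hSm, Set.mem_setOf_eq, not_lt] at h1 h2
      exact le_antisymm h1 h2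
    · have hU2 : U \ Ω = ∅ := by
        rw [Set.diff_eq_empty, hUdef]
        exact Set.union_subset Set.inter_subset_left Set.inter_subset_left
      rw [hU2, measure_empty]
  have hpre : σ ⁻¹' A' = A := by
    ext x
    simp only [Set.mem_preimage, hA, hA', Set.mem_inter_iff, hSp, hSm, Set.mem_setOf_eq]
    rw [hσΩ, hinner]
    constructor
    · rintro ⟨h1, h2⟩; exact ⟨h1, by linarith⟩
    · rintro ⟨h1, h2⟩; exact ⟨h1, by linarith⟩
  have hmpA : MeasurePreserving σ (volume.restrict A) (volume.restrict A') := by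
    have := hmp.restrict_preimage_emb hemb A'
    rwa [hpre] at this
  -- integrability of the gradient powers
  have hppos : (0:ℝ) < p := lt_of_lt_of_le one_pos hp
  have hD : IntegrableOn (fun x => ‖fderiv ℝ u x‖ ^ p) Ω volume := by
    have h0 : (ENNReal.ofReal p) ≠ 0 := ne_of_gt (ENNReal.ofReal_pos.mpr hppos)
    have hint := hguLp.integrable_norm_rpow h0 ENNReal.ofReal_ne_top
    simpa [ENNReal.toReal_ofReal hppos.le, norm_norm, IntegrableOn] using hint
  have hDA : IntegrableOn (fun x => ‖fderiv ℝ u x‖ ^ p) A volume :=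
    hD.mono_set Set.inter_subset_left
  have hDA' : IntegrableOn (fun x => ‖fderiv ℝ u x‖ ^ p) A' volume :=
    hD.mono_set Set.inter_subset_left
  have hDσA : IntegrableOn (fun x => ‖fderiv ℝ u (σ x)‖ ^ p) A volume := by
    have hcomp : (fun x => ‖fderiv ℝ u (σ x)‖ ^ p)
        = (fun x => ‖fderiv ℝ u x‖ ^ p) ∘ σ := rfl
    rw [IntegrableOn, hcomp]
    exact (hmpA.integrable_comp_emb hemb).mpr hDA'
  -- measurability of various functions
  have hfdu_meas : Measurable fun x => ‖fderiv ℝ u x‖ ^ p :=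
    (Real.continuous_rpow_const hppos.le).measurable.comp (measurable_fderiv ℝ u).norm
  have hfduH_meas : Measurable fun x => ‖fderiv ℝ uH x‖ ^ p :=
    (Real.continuous_rpow_const hppos.le).measurable.comp (measurable_fderiv ℝ uH).norm
  have huA : AEMeasurable u (volume.restrict A) :=
    (hucont.mono Set.inter_subset_left).aemeasurable hAmeas
  have huA' : AEMeasurable u (volume.restrict A') :=
    (hucont.mono Set.inter_subset_left).aemeasurable hA'meas
  have huHcontA : ContinuousOn uH A := by
    refine ContinuousOn.congr ((hucont.mono Set.inter_subset_left).sup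
      (huσcont.mono Set.inter_subset_left)) ?_
    intro y hy
    rw [huH y, if_pos (show (0:ℝ) < ⟪y, e⟫ from hy.2)]
  have huHcontA' : ContinuousOn uH A' := by
    refine ContinuousOn.congr ((hucont.mono Set.inter_subset_left).inf
      (huσcont.mono Set.inter_subset_left)) ?_
    intro y hy
    rw [huH y, if_neg (show ¬ (0:ℝ) < ⟪y, e⟫ from not_lt.mpr (le_of_lt hy.2))]
  have huHA : AEMeasurable uH (volume.restrict A) := huHcontA.aemeasurable hAmeas
  have huHA' : AEMeasurable uH (volume.restrict A') := huHcontA'.aemeasurable hA'meas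
  have huHσA : AEMeasurable (fun x => uH (σ x)) (volume.restrict A) := by
    have hmapsto : Set.MapsTo σ A A' := by
      intro x hx
      rw [← hpre] at hx
      exact hx
    exact (huHcontA'.comp hσcont.continuousOn hmapsto).aemeasurable hAmeas
  have huσA : AEMeasurable (fun x => u (σ x)) (volume.restrict A) :=
    ((huσcont.mono Set.inter_subset_left)).aemeasurable hAmeas
  -- restricted key estimate
  have keyA := (ae_restrict_iff' hAmeas).mpr key
  -- integrability of the integrands
  have habs : ∀ (t s' : ℝ), 0 ≤ s' → |B t * s'| ≤ M * s' := by
    intro t s' hs'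
    rw [abs_mul, abs_of_nonneg hs']
    exact mul_le_mul_of_nonneg_right (hM t) hs'
  have hGuA : IntegrableOn (fun x => B (u x) * ‖fderiv ℝ u x‖ ^ p) A volume := by
    refine Integrable.mono' (hDA.const_mul M) ?_ ?_
    · exact ((hBmeas.comp_aemeasurable huA).mul
        hfdu_meas.aemeasurable).aestronglyMeasurable
    · refine Filter.Eventually.of_forall fun x => ?_
      exact habs _ _ (Real.rpow_nonneg (norm_nonneg _) p)
  have hGuA' : IntegrableOn (fun x => B (u x) * ‖fderiv ℝ u x‖ ^ p) A' volume := by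
    refine Integrable.mono' (hDA'.const_mul M) ?_ ?_
    · exact ((hBmeas.comp_aemeasurable huA').mul
        hfdu_meas.aemeasurable).aestronglyMeasurable
    · refine Filter.Eventually.of_forall fun x => ?_
      exact habs _ _ (Real.rpow_nonneg (norm_nonneg _) p)
  have hGuσA : IntegrableOn (fun x => B (u (σ x)) * ‖fderiv ℝ u (σ x)‖ ^ p) A volume := by
    have hcomp : (fun x => B (u (σ x)) * ‖fderiv ℝ u (σ x)‖ ^ p)
        = (fun x => B (u x) * ‖fderiv ℝ u x‖ ^ p) ∘ σ := rfl
    rw [IntegrableOn, hcomp]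
    exact (hmpA.integrable_comp_emb hemb).mpr hGuA'
  have hGuHA : IntegrableOn (fun x => B (uH x) * ‖fderiv ℝ uH x‖ ^ p) A volume := by
    refine Integrable.mono' ((hDA.add hDσA).const_mul M) ?_ ?_
    · exact ((hBmeas.comp_aemeasurable huHA).mul
        hfduH_meas.aemeasurable).aestronglyMeasurable
    · filter_upwards [keyA] with x hx
      calc |B (uH x) * ‖fderiv ℝ uH x‖ ^ p|
          ≤ M * (‖fderiv ℝ uH x‖ ^ p) := habs _ _ (Real.rpow_nonneg (norm_nonneg _) p)
        _ ≤ M * (‖fderiv ℝ u x‖ ^ p + ‖fderiv ℝ u (σ x)‖ ^ p) :=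
            mul_le_mul_of_nonneg_left hx.2.1 hM0
  have hGuHσA : IntegrableOn (fun x => B (uH (σ x)) * ‖fderiv ℝ uH (σ x)‖ ^ p) A volume := by
    refine Integrable.mono' ((hDA.add hDσA).const_mul M) ?_ ?_
    · refine ((hBmeas.comp_aemeasurable huHσA).mul ?_).aestronglyMeasurable
      exact (hfduH_meas.comp hσmeas).aemeasurable
    · filter_upwards [keyA] with x hx
      calc |B (uH (σ x)) * ‖fderiv ℝ uH (σ x)‖ ^ p|
          ≤ M * (‖fderiv ℝ uH (σ x)‖ ^ p) := habs _ _ (Real.rpow_nonneg (norm_nonneg _) p)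
        _ ≤ M * (‖fderiv ℝ u x‖ ^ p + ‖fderiv ℝ u (σ x)‖ ^ p) :=
            mul_le_mul_of_nonneg_left hx.2.2 hM0
  have hGuHA' : IntegrableOn (fun x => B (uH x) * ‖fderiv ℝ uH x‖ ^ p) A' volume := by
    have hcomp : (fun x => B (uH (σ x)) * ‖fderiv ℝ uH (σ x)‖ ^ p)
        = (fun x => B (uH x) * ‖fderiv ℝ uH x‖ ^ p) ∘ σ := rfl
    rw [IntegrableOn, hcomp] at hGuHσA
    exact (hmpA.integrable_comp_emb hemb).mp hGuHσA
  -- split the integrals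
  have hsplit : ∀ v : EuclideanSpace ℝ (Fin N) → ℝ,
      IntegrableOn (fun x => B (v x) * ‖fderiv ℝ v x‖ ^ p) A volume →
      IntegrableOn (fun x => B (v x) * ‖fderiv ℝ v x‖ ^ p) A' volume →
      ∫ x in Ω, B (v x) * ‖fderiv ℝ v x‖ ^ p
        = (∫ x in A, B (v x) * ‖fderiv ℝ v x‖ ^ p)
          + ∫ x in A, B (v (σ x)) * ‖fderiv ℝ v (σ x)‖ ^ p := by
    intro v hvA hvA'
    rw [setIntegral_congr_set hΩae, hUdef, setIntegral_union hdisj hA'meas hvA hvA']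
    congr 1
    have := hmp.setIntegral_preimage_emb hemb
      (fun x => B (v x) * ‖fderiv ℝ v x‖ ^ p) A'
    rw [hpre] at this
    rw [← this]
  rw [hsplit u hGuA hGuA', hsplit uH hGuHA hGuHA']
  rw [← integral_add hGuA hGuσA, ← integral_add hGuHA hGuHσA]
  refine integral_congr_ae ?_
  filter_upwards [keyA] with x hx
  exact hx.1.symm
end

section
/- Let 0 < θ < 1/2 and let h_θ(ξ) = ξ(1+|ξ|)^θ − sgn(ξ)[(1+|ξ|)^{1−θ} − 1]/(1−θ). Then for every M > 0 there is a constant C = C(M) > 0, independent of θ, such that |h_θ'(ξ)| ≤ Cθ for all |ξ| ≤ M; consequently |h_θ(ξ₁) − h_θ(ξ₂)| ≤ Cθ|ξ₁ − ξ₂| for all ξ₁, ξ₂ ∈ [−M, M]. -/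
noncomputable def hfun (θ : ℝ) (ξ : ℝ) : ℝ :=
  ξ * (1 + |ξ|) ^ θ - Real.sign ξ * ((1 + |ξ|) ^ (1 - θ) - 1) / (1 - θ)

/-- The derivative of `hfun θ`. -/
noncomputable def Dfun (θ : ℝ) (ξ : ℝ) : ℝ :=
  (1 + |ξ|) ^ θ + θ * |ξ| * (1 + |ξ|) ^ (θ - 1) - (1 + |ξ|) ^ (-θ)

lemma hfun_odd (θ x : ℝ) : hfun θ (-x) = - hfun θ x := by
  simp only [hfun, abs_neg, Real.sign_neg]
  ring

lemma Dfun_neg (θ x : ℝ) : Dfun θ (-x) = Dfun θ x := by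
  simp [Dfun, abs_neg]

/-- smooth model on the right -/
noncomputable def fpos (θ : ℝ) (x : ℝ) : ℝ :=
  x * (1 + x) ^ θ - ((1 + x) ^ (1 - θ) - 1) / (1 - θ)

lemma hfun_eq_fpos (θ : ℝ) {x : ℝ} (hx : 0 ≤ x) : hfun θ x = fpos θ x := by
  rcases eq_or_lt_of_le hx with h | h
  · simp [hfun, fpos, ← h]
  · simp [hfun, fpos, abs_of_pos h, Real.sign_of_pos h]

lemma hasDerivAt_fpos (θ : ℝ) (hθ : θ < 1) {x : ℝ} (hx : 0 < 1 + x) :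
    HasDerivAt (fpos θ) ((1 + x) ^ θ + θ * x * (1 + x) ^ (θ - 1) - (1 + x) ^ (-θ)) x := by
  have h0 : (1 : ℝ) + x ≠ 0 := ne_of_gt hx
  have h1 : HasDerivAt (fun y : ℝ => 1 + y) 1 x := by
    simpa using (hasDerivAt_id x).const_add 1
  have h2 : HasDerivAt (fun y : ℝ => (1 + y) ^ θ) (1 * θ * (1 + x) ^ (θ - 1)) x :=
    h1.rpow_const (Or.inl h0)
  have h3 : HasDerivAt (fun y : ℝ => y * (1 + y) ^ θ)
      (1 * (1 + x) ^ θ + x * (1 * θ * (1 + x) ^ (θ - 1))) x :=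
    (hasDerivAt_id x).mul h2
  have h4 : HasDerivAt (fun y : ℝ => (1 + y) ^ (1 - θ)) (1 * (1 - θ) * (1 + x) ^ (1 - θ - 1)) x :=
    h1.rpow_const (Or.inl h0)
  have h5 : HasDerivAt (fun y : ℝ => ((1 + y) ^ (1 - θ) - 1) / (1 - θ))
      (1 * (1 - θ) * (1 + x) ^ (1 - θ - 1) / (1 - θ)) x :=
    (h4.sub_const 1).div_const (1 - θ)
  have := h3.sub h5
  refine (this : HasDerivAt (fpos θ) _ x).congr_deriv ?_
  have hne : (1 : ℝ) - θ ≠ 0 := by linarith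
  have : (1 : ℝ) - θ - 1 = -θ := by ring
  rw [this]
  field_simp

lemma hasDerivAt_hfun (θ : ℝ) (hθ : θ < 1) (ξ : ℝ) :
    HasDerivAt (hfun θ) (Dfun θ ξ) ξ := by
  -- first, the case ξ ≥ 0 as HasDerivWithinAt on Ici, plus full HasDerivAt for ξ > 0
  have key : ∀ x : ℝ, 0 ≤ x → HasDerivWithinAt (hfun θ) (Dfun θ x) (Set.Ici 0) x := by
    intro x hx
    have hx1 : (0:ℝ) < 1 + x := by linarith
    have h := (hasDerivAt_fpos θ hθ hx1).hasDerivWithinAt (s := Set.Ici 0)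
    have h' : HasDerivWithinAt (hfun θ)
        ((1 + x) ^ θ + θ * x * (1 + x) ^ (θ - 1) - (1 + x) ^ (-θ)) (Set.Ici 0) x := by
      refine h.congr (fun y hy => hfun_eq_fpos θ hy) (hfun_eq_fpos θ hx)
    simpa [Dfun, abs_of_nonneg hx] using h'
  have keyIic : ∀ x : ℝ, x ≤ 0 → HasDerivWithinAt (hfun θ) (Dfun θ x) (Set.Iic 0) x := by
    intro x hx
    have h := key (-x) (by linarith)
    -- compose with negation
    have hneg : HasDerivWithinAt (fun y : ℝ => hfun θ (-y)) (Dfun θ (-x) * (-1)) (Set.Iic 0) x := by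
      have hmap : Set.MapsTo (fun y : ℝ => -y) (Set.Iic 0) (Set.Ici 0) := by
        intro y hy; simpa using hy
      exact h.comp x ((hasDerivAt_neg x).hasDerivWithinAt) hmap
    have : HasDerivWithinAt (fun y : ℝ => -hfun θ (-y)) (-(Dfun θ (-x) * (-1))) (Set.Iic 0) x := hneg.neg
    have heq : (fun y : ℝ => -hfun θ (-y)) = hfun θ := by
      funext y; rw [hfun_odd]; ring
    rw [heq] at this
    simpa [Dfun_neg] using this
  rcases lt_trichotomy ξ 0 with h | h | h
  · -- ξ < 0 : full derivative via eventual equality with reflected function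
    have h' := keyIic ξ h.le
    have : Set.Iic (0:ℝ) ∈ nhds ξ := Iic_mem_nhds h
    exact h'.hasDerivAt this
  · subst h
    have h1 := key 0 le_rfl
    have h2 := keyIic 0 le_rfl
    have := h2.union h1
    rw [Set.Iic_union_Ici] at this
    exact hasDerivWithinAt_univ.mp this
  · have h' := key ξ h.le
    exact h'.hasDerivAt (Ici_mem_nhds h)

lemma Dfun_bound (M θ : ℝ) (hM : 0 < M) (hθ0 : 0 < θ) (hθ : θ < 1 / 2)
    {ξ : ℝ} (hξ : |ξ| ≤ M) :
    |Dfun θ ξ| ≤ (2 * (1 + M) * Real.log (1 + M) + M + 1) * θ := by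
  set a : ℝ := 1 + |ξ| with ha
  have ha1 : (1:ℝ) ≤ a := le_add_of_nonneg_right (abs_nonneg ξ)
  have haM : a ≤ 1 + M := by simp only [ha]; linarith
  have ha0 : (0:ℝ) < a := by linarith
  have h1 : a ^ (-θ) ≤ a ^ θ :=
    Real.rpow_le_rpow_of_exponent_le ha1 (by linarith)
  have h2 : (0:ℝ) ≤ θ * |ξ| * a ^ (θ - 1) := by
    positivity
  have hD0 : 0 ≤ Dfun θ ξ := by
    simp only [Dfun, ← ha]; linarith
  rw [abs_of_nonneg hD0]
  -- bound the middle term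
  have hmid : θ * |ξ| * a ^ (θ - 1) ≤ θ * M := by
    have h3 : a ^ (θ - 1) ≤ 1 :=
      Real.rpow_le_one_of_one_le_of_nonpos ha1 (by linarith)
    calc θ * |ξ| * a ^ (θ - 1) ≤ θ * M * 1 := by
          apply mul_le_mul (by nlinarith [abs_nonneg ξ]) h3 (by positivity) (by positivity)
      _ = θ * M := by ring
  -- bound a^θ - a^(-θ)
  have hlog : 0 ≤ Real.log a := Real.log_nonneg ha1
  have hexp : a ^ θ - a ^ (-θ) ≤ a ^ (2 * θ) - 1 := by
    have h4 : a ^ θ - a ^ (-θ) = a ^ (-θ) * (a ^ (2*θ) - 1) := by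
      rw [mul_sub, ← Real.rpow_add ha0]
      ring_nf
    have h5 : a ^ (-θ) ≤ 1 := Real.rpow_le_one_of_one_le_of_nonpos ha1 (by linarith)
    have h6 : 0 ≤ a ^ (2*θ) - 1 := by
      have h6' := Real.rpow_le_rpow_of_exponent_le ha1 (show (0:ℝ) ≤ 2*θ by linarith)
      rw [Real.rpow_zero] at h6'
      linarith
    nlinarith [Real.rpow_nonneg ha0.le (-θ)]
  have hexp2 : a ^ (2 * θ) - 1 ≤ 2 * θ * Real.log a * a ^ (2 * θ) := by
    -- e^t - 1 ≤ t e^t with t = 2θ log a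
    set t : ℝ := 2 * θ * Real.log a with ht
    have ht0 : 0 ≤ t := by positivity
    have hat : a ^ (2 * θ) = Real.exp t := by
      rw [Real.rpow_def_of_pos ha0, ht]; ring_nf
    have hle := Real.add_one_le_exp (-t)
    have hE : Real.exp t - 1 ≤ t * Real.exp t := by
      have hprod : Real.exp t * Real.exp (-t) = 1 := by rw [← Real.exp_add]; simp
      have hm := mul_le_mul_of_nonneg_left hle (Real.exp_pos t).le
      nlinarith
    rw [hat]; linarith
  have hpow : a ^ (2 * θ) ≤ a := by
    calc a ^ (2*θ) ≤ a ^ (1:ℝ) := Real.rpow_le_rpow_of_exponent_le ha1 (by linarith)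
      _ = a := Real.rpow_one a
  have hloga : Real.log a ≤ Real.log (1 + M) := Real.log_le_log ha0 haM
  have hfinal : a ^ θ - a ^ (-θ) ≤ 2 * θ * (1 + M) * Real.log (1 + M) := by
    have h7 : 2 * θ * Real.log a * a ^ (2*θ) ≤ 2 * θ * Real.log a * a :=
      mul_le_mul_of_nonneg_left hpow (by positivity)
    have h8 : 2 * θ * Real.log a * a ≤ 2 * θ * (1+M) * Real.log (1+M) := by
      have hl1M : 0 ≤ Real.log (1+M) := Real.log_nonneg (by linarith)
      nlinarith [mul_le_mul hloga haM (by linarith : (0:ℝ) ≤ a) hl1M]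
    linarith
  simp only [Dfun, ← ha]
  nlinarith

theorem stmt_14 (M : ℝ) (hM : 0 < M) :
    ∃ C : ℝ, 0 < C ∧
      ∀ θ : ℝ, 0 < θ → θ < 1 / 2 →
        (∀ ξ : ℝ, |ξ| ≤ M → |deriv (hfun θ) ξ| ≤ C * θ) ∧
        (∀ ξ₁ ξ₂ : ℝ, ξ₁ ∈ Set.Icc (-M) M → ξ₂ ∈ Set.Icc (-M) M →
          |hfun θ ξ₁ - hfun θ ξ₂| ≤ C * θ * |ξ₁ - ξ₂|) := by
  refine ⟨2 * (1 + M) * Real.log (1 + M) + M + 1, ?_, ?_⟩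
  · have : 0 ≤ Real.log (1 + M) := Real.log_nonneg (by linarith)
    nlinarith
  intro θ hθ0 hθ
  have hθ1 : θ < 1 := by linarith
  have hderiv : ∀ ξ : ℝ, deriv (hfun θ) ξ = Dfun θ ξ := fun ξ =>
    (hasDerivAt_hfun θ hθ1 ξ).deriv
  constructor
  · intro ξ hξ
    rw [hderiv]
    exact Dfun_bound M θ hM hθ0 hθ hξ
  · intro ξ₁ ξ₂ h₁ h₂
    have hdiff : ∀ x ∈ Set.Icc (-M) M, DifferentiableAt ℝ (hfun θ) x := fun x _ =>
      (hasDerivAt_hfun θ hθ1 x).differentiableAt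
    have hbound : ∀ x ∈ Set.Icc (-M) M, ‖deriv (hfun θ) x‖ ≤
        (2 * (1 + M) * Real.log (1 + M) + M + 1) * θ := by
      intro x hx
      rw [hderiv, Real.norm_eq_abs]
      exact Dfun_bound M θ hM hθ0 hθ (abs_le.mpr ⟨hx.1, hx.2⟩)
    have := (convex_Icc (-M) M).norm_image_sub_le_of_norm_deriv_le hdiff hbound h₂ h₁
    simpa [Real.norm_eq_abs] using this
end

section
/- Let 0 < θ < 1/2 and u, v ∈ ℝ. Then |u(1+|u|)^θ − v(1+|v|)^θ| ≤ (1+θ)[1 + (1−θ)|ξ|]^{2θ/(1−θ)} |Ψ_θ(u) − Ψ_θ(v)| for some ξ between Ψ_θ(u) and Ψ_θ(v), where Ψ_θ(ξ) = sgn(ξ)[(1+|ξ|)^{1−θ} − 1]/(1−θ). -/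
noncomputable def Psi (θ : ℝ) (ξ : ℝ) : ℝ :=
  Real.sign ξ * ((1 + |ξ|) ^ (1 - θ) - 1) / (1 - θ)

lemma psi_zero (θ : ℝ) : Psi θ 0 = 0 := by simp [Psi]

lemma psi_odd (θ u : ℝ) : Psi θ (-u) = -Psi θ u := by
  unfold Psi; rw [Real.sign_neg, abs_neg]; ring

lemma psi_of_nonneg {θ u : ℝ} (hu : 0 ≤ u) :
    Psi θ u = ((1 + u) ^ (1 - θ) - 1) / (1 - θ) := by
  rcases hu.eq_or_lt with rfl | h
  · simp [Psi]
  · unfold Psi; rw [Real.sign_of_pos h, abs_of_pos h, one_mul]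

lemma psi_nonneg {θ u : ℝ} (hθ1 : θ < 1) (hu : 0 ≤ u) : 0 ≤ Psi θ u := by
  rw [psi_of_nonneg hu]
  have h1 : (1:ℝ) ≤ (1 + u) ^ (1 - θ) := by
    calc (1:ℝ) = 1 ^ (1 - θ) := (Real.one_rpow _).symm
    _ ≤ (1 + u) ^ (1 - θ) := Real.rpow_le_rpow zero_le_one (by linarith) (by linarith)
  have h2 : (0:ℝ) < 1 - θ := by linarith
  exact div_nonneg (by linarith) h2.le

noncomputable def Fp (θ : ℝ) (η : ℝ) : ℝ :=
  (1 + (1 - θ) * η) ^ ((1 + θ) / (1 - θ)) - (1 + (1 - θ) * η) ^ (θ / (1 - θ))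

lemma fp_psi {θ u : ℝ} (hθ1 : θ < 1) (hu : 0 ≤ u) :
    Fp θ (Psi θ u) = u * (1 + u) ^ θ := by
  have h1θ : (0:ℝ) < 1 - θ := by linarith
  have hpos : (0:ℝ) < 1 + u := by linarith
  have hB : 1 + (1 - θ) * Psi θ u = (1 + u) ^ (1 - θ) := by
    rw [psi_of_nonneg hu]; field_simp; ring
  have e1 : (1 - θ) * ((1 + θ) / (1 - θ)) = 1 + θ := by field_simp
  have e2 : (1 - θ) * (θ / (1 - θ)) = θ := by field_simp
  unfold Fp
  rw [hB, ← Real.rpow_mul hpos.le, ← Real.rpow_mul hpos.le, e1, e2,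
    show (1:ℝ) + θ = θ + 1 by ring, Real.rpow_add hpos, Real.rpow_one]
  ring

lemma hasDerivAt_Fp {θ : ℝ} (hθ0 : 0 < θ) (hθ1 : θ < 1) {η : ℝ} (hη : 0 ≤ η) :
    HasDerivAt (Fp θ)
      ((1 + θ) * (1 + (1 - θ) * η) ^ (2 * θ / (1 - θ)) -
        θ * (1 + (1 - θ) * η) ^ ((2 * θ - 1) / (1 - θ))) η := by
  have h1θ : (0:ℝ) < 1 - θ := by linarith
  have hB : (0:ℝ) < 1 + (1 - θ) * η := by positivity
  have hB' : HasDerivAt (fun η : ℝ => 1 + (1 - θ) * η) (1 - θ) η := by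
    simpa using ((hasDerivAt_id η).const_mul (1 - θ)).const_add 1
  have h1 := (Real.hasDerivAt_rpow_const (p := (1 + θ) / (1 - θ)) (Or.inl hB.ne')).comp η hB'
  have h2 := (Real.hasDerivAt_rpow_const (p := θ / (1 - θ)) (Or.inl hB.ne')).comp η hB'
  have e1 : (1 + θ) / (1 - θ) - 1 = 2 * θ / (1 - θ) := by field_simp; ring
  have e2 : θ / (1 - θ) - 1 = (2 * θ - 1) / (1 - θ) := by field_simp; ring
  have := h1.sub h2
  refine HasDerivAt.congr_deriv this ?_
  rw [e1, e2]
  field_simp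

/-- MVT estimate on the nonnegative half-line. -/
lemma pos_case {θ : ℝ} (hθ0 : 0 < θ) (hθ1 : θ < 1) {a b : ℝ} (ha : 0 ≤ a) (hab : a ≤ b) :
    ∃ ξ ∈ Set.Icc a b,
      |Fp θ b - Fp θ a| ≤ (1 + θ) * (1 + (1 - θ) * ξ) ^ (2 * θ / (1 - θ)) * (b - a) := by
  rcases eq_or_lt_of_le hab with rfl | hlt
  · exact ⟨a, by simp, by simp⟩
  have h1θ : (0:ℝ) < 1 - θ := by linarith
  set D : ℝ → ℝ := fun η =>
    (1 + θ) * (1 + (1 - θ) * η) ^ (2 * θ / (1 - θ)) -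
      θ * (1 + (1 - θ) * η) ^ ((2 * θ - 1) / (1 - θ)) with hD
  have hcont : ContinuousOn (Fp θ) (Set.Icc a b) := fun x hx =>
    (hasDerivAt_Fp hθ0 hθ1 (le_trans ha hx.1)).continuousAt.continuousWithinAt
  obtain ⟨ξ, hξ, hslope⟩ := exists_hasDerivAt_eq_slope (Fp θ) D hlt hcont
    (fun x hx => hasDerivAt_Fp hθ0 hθ1 (le_trans ha hx.1.le))
  refine ⟨ξ, ⟨hξ.1.le, hξ.2.le⟩, ?_⟩
  have hξ0 : 0 ≤ ξ := le_trans ha hξ.1.le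
  have hB1 : (1:ℝ) ≤ 1 + (1 - θ) * ξ := by nlinarith
  have hmono : (1 + (1 - θ) * ξ) ^ ((2 * θ - 1) / (1 - θ)) ≤
      (1 + (1 - θ) * ξ) ^ (2 * θ / (1 - θ)) := by
    exact Real.rpow_le_rpow_of_exponent_le hB1 ((div_le_div_iff_of_pos_right h1θ).mpr (by linarith))
  have h2 : (0:ℝ) ≤ (1 + (1 - θ) * ξ) ^ ((2 * θ - 1) / (1 - θ)) :=
    Real.rpow_nonneg (by linarith) _
  have hDpos : 0 ≤ D ξ := by simp only [hD]; nlinarith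
  have hDle : D ξ ≤ (1 + θ) * (1 + (1 - θ) * ξ) ^ (2 * θ / (1 - θ)) := by
    simp only [hD]; nlinarith
  have hba : (0:ℝ) < b - a := by linarith
  have : Fp θ b - Fp θ a = D ξ * (b - a) := by
    field_simp at hslope
    linarith [hslope]
  rw [this, abs_of_nonneg (by positivity)]
  exact mul_le_mul_of_nonneg_right hDle hba.le

lemma half_le {θ : ℝ} (hθ0 : 0 < θ) (hθ1 : θ < 1) {u v : ℝ} (hu : 0 ≤ u) (hv : 0 ≤ v)
    (h : Psi θ u ≤ Psi θ v) :
    ∃ ξ ∈ Set.uIcc (Psi θ u) (Psi θ v),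
      |u * (1 + |u|) ^ θ - v * (1 + |v|) ^ θ| ≤
        (1 + θ) * (1 + (1 - θ) * |ξ|) ^ (2 * θ / (1 - θ)) * |Psi θ u - Psi θ v| := by
  obtain ⟨ξ, hξ, hb⟩ := pos_case hθ0 hθ1 (psi_nonneg hθ1 hu) h
  refine ⟨ξ, Set.Icc_subset_uIcc hξ, ?_⟩
  have hξ0 : 0 ≤ ξ := le_trans (psi_nonneg hθ1 hu) hξ.1
  rw [abs_of_nonneg hu, abs_of_nonneg hv, abs_of_nonneg hξ0,
    show |Psi θ u - Psi θ v| = Psi θ v - Psi θ u from by rw [abs_sub_comm]; exact abs_of_nonneg (by linarith),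
    ← fp_psi hθ1 hu, ← fp_psi hθ1 hv, abs_sub_comm]
  exact hb

lemma half {θ : ℝ} (hθ0 : 0 < θ) (hθ1 : θ < 1) {u v : ℝ} (hu : 0 ≤ u) (hv : 0 ≤ v) :
    ∃ ξ ∈ Set.uIcc (Psi θ u) (Psi θ v),
      |u * (1 + |u|) ^ θ - v * (1 + |v|) ^ θ| ≤
        (1 + θ) * (1 + (1 - θ) * |ξ|) ^ (2 * θ / (1 - θ)) * |Psi θ u - Psi θ v| := by
  rcases le_total (Psi θ u) (Psi θ v) with h | h
  · exact half_le hθ0 hθ1 hu hv h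
  · obtain ⟨ξ, hξ, hb⟩ := half_le hθ0 hθ1 hv hu h
    refine ⟨ξ, Set.uIcc_comm (Psi θ v) (Psi θ u) ▸ hξ, ?_⟩
    rwa [abs_sub_comm (v * (1 + |v|) ^ θ), abs_sub_comm (Psi θ v)] at hb

lemma neg_half {θ : ℝ} (hθ0 : 0 < θ) (hθ1 : θ < 1) {u v : ℝ} (hu : u ≤ 0) (hv : v ≤ 0) :
    ∃ ξ ∈ Set.uIcc (Psi θ u) (Psi θ v),
      |u * (1 + |u|) ^ θ - v * (1 + |v|) ^ θ| ≤
        (1 + θ) * (1 + (1 - θ) * |ξ|) ^ (2 * θ / (1 - θ)) * |Psi θ u - Psi θ v| := by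
  obtain ⟨ξ, hξ, hb⟩ := half hθ0 hθ1 (u := -u) (v := -v) (by linarith) (by linarith)
  rw [psi_odd, psi_odd] at hξ hb
  refine ⟨-ξ, ?_, ?_⟩
  · rw [Set.mem_uIcc] at hξ ⊢
    rcases hξ with ⟨h1, h2⟩ | ⟨h1, h2⟩
    · right; constructor <;> linarith
    · left; constructor <;> linarith
  · have e1 : (-u) * (1 + |(-u)|) ^ θ - (-v) * (1 + |(-v)|) ^ θ =
        -(u * (1 + |u|) ^ θ - v * (1 + |v|) ^ θ) := by rw [abs_neg, abs_neg]; ring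
    have e2 : -Psi θ u - -Psi θ v = -(Psi θ u - Psi θ v) := by ring
    rw [e1, e2, abs_neg, abs_neg] at hb
    rwa [abs_neg]

lemma mixed {θ : ℝ} (hθ0 : 0 < θ) (hθ1 : θ < 1) {u v : ℝ} (hu : u ≤ 0) (hv : 0 ≤ v) :
    ∃ ξ ∈ Set.uIcc (Psi θ u) (Psi θ v),
      |u * (1 + |u|) ^ θ - v * (1 + |v|) ^ θ| ≤
        (1 + θ) * (1 + (1 - θ) * |ξ|) ^ (2 * θ / (1 - θ)) * |Psi θ u - Psi θ v| := by
  obtain ⟨ξ₁, hξ₁, h1⟩ := neg_half hθ0 hθ1 (v := 0) hu le_rfl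
  obtain ⟨ξ₂, hξ₂, h2⟩ := half hθ0 hθ1 (u := 0) le_rfl hv
  rw [psi_zero] at hξ₁ hξ₂ h1 h2
  simp only [zero_mul, sub_zero, zero_sub, abs_neg, abs_zero] at h1 h2
  have ha : Psi θ u ≤ 0 := by
    have h := psi_nonneg hθ1 (neg_nonneg.mpr hu)
    rw [psi_odd] at h; linarith
  have hb0 : 0 ≤ Psi θ v := psi_nonneg hθ1 hv
  rw [Set.mem_uIcc] at hξ₁ hξ₂
  have hξ₁' : Psi θ u ≤ ξ₁ ∧ ξ₁ ≤ 0 := by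
    rcases hξ₁ with h | h <;> exact ⟨by linarith [h.1, h.2], by linarith [h.1, h.2]⟩
  have hξ₂' : 0 ≤ ξ₂ ∧ ξ₂ ≤ Psi θ v := by
    rcases hξ₂ with h | h <;> exact ⟨by linarith [h.1, h.2], by linarith [h.1, h.2]⟩
  have habs : |Psi θ u - Psi θ v| = |Psi θ u| + |Psi θ v| := by
    rw [abs_of_nonpos (by linarith), abs_of_nonpos ha, abs_of_nonneg hb0]; ring
  have t1 := abs_sub_le (u * (1 + |u|) ^ θ) 0 (v * (1 + |v|) ^ θ)
  simp only [sub_zero, zero_sub, abs_neg] at t1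
  rcases le_total ((1 + θ) * (1 + (1 - θ) * |ξ₁|) ^ (2 * θ / (1 - θ)))
      ((1 + θ) * (1 + (1 - θ) * |ξ₂|) ^ (2 * θ / (1 - θ))) with hcmp | hcmp
  · refine ⟨ξ₂, ?_, ?_⟩
    · rw [Set.mem_uIcc]; left; exact ⟨le_trans ha hξ₂'.1, hξ₂'.2⟩
    · have m1 : (1 + θ) * (1 + (1 - θ) * |ξ₁|) ^ (2 * θ / (1 - θ)) * |Psi θ u| ≤
          (1 + θ) * (1 + (1 - θ) * |ξ₂|) ^ (2 * θ / (1 - θ)) * |Psi θ u| :=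
        mul_le_mul_of_nonneg_right hcmp (abs_nonneg _)
      rw [habs, mul_add]
      linarith
  · refine ⟨ξ₁, ?_, ?_⟩
    · rw [Set.mem_uIcc]; left; exact ⟨hξ₁'.1, le_trans hξ₁'.2 hb0⟩
    · have m1 : (1 + θ) * (1 + (1 - θ) * |ξ₂|) ^ (2 * θ / (1 - θ)) * |Psi θ v| ≤
          (1 + θ) * (1 + (1 - θ) * |ξ₁|) ^ (2 * θ / (1 - θ)) * |Psi θ v| :=
        mul_le_mul_of_nonneg_right hcmp (abs_nonneg _)
      rw [habs, mul_add]
      linarith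

theorem stmt_15 (θ : ℝ) (hθ0 : 0 < θ) (hθ1 : θ < 1 / 2) (u v : ℝ) :
    ∃ ξ ∈ Set.uIcc (Psi θ u) (Psi θ v),
      |u * (1 + |u|) ^ θ - v * (1 + |v|) ^ θ| ≤
        (1 + θ) * (1 + (1 - θ) * |ξ|) ^ (2 * θ / (1 - θ)) * |Psi θ u - Psi θ v| := by
  have hθ1' : θ < 1 := by linarith
  rcases le_total u 0 with hu | hu <;> rcases le_total v 0 with hv | hv
  · exact neg_half hθ0 hθ1' hu hv
  · exact mixed hθ0 hθ1' hu hv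
  · obtain ⟨ξ, hξ, hb⟩ := mixed hθ0 hθ1' hv hu
    refine ⟨ξ, Set.uIcc_comm (Psi θ v) (Psi θ u) ▸ hξ, ?_⟩
    rwa [abs_sub_comm (v * (1 + |v|) ^ θ), abs_sub_comm (Psi θ v)] at hb
  · exact half hθ0 hθ1' hu hv
end
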